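/- Let (G,·) be a finite GS-loop whose middle nucleus N_μ(G,·) has more than one element. Then, taking the S-subgroup H = N_μ(G,·), one has |H| = |SBS(G,·)| / |SA(G,·)|, and there exists a natural number n > 1 such that |G| = n·|SBS(G,·)| / |SA(G,·)|. -/

import Mathlib

/-- A loop: a quasigroup with a two-sided identity element. -/
structure Loop (G : Type*) where
  mul : G → G → G
  e : G
  one_mul : ∀ x, mul e x = x
  mul_one : ∀ x, mul x e = x
  exU_right : ∀ a b, ∃! x, mul a x = b
  exU_left : ∀ a b, ∃! y, mul y a = b

namespace Loop

variable {G : Type*}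

theorem mulRight_bijective (L : Loop G) (a : G) :
    Function.Bijective (fun y => L.mul y a) := by
  constructor
  · intro x y hxy
    obtain ⟨z, hz, huniq⟩ := L.exU_left a (L.mul x a)
    exact (huniq x rfl).trans (huniq y (by simpa using hxy.symm)).symm
  · intro b
    obtain ⟨z, hz, -⟩ := L.exU_left a b
    exact ⟨z, hz⟩

theorem mulLeft_bijective (L : Loop G) (a : G) :
    Function.Bijective (fun y => L.mul a y) := by
  constructor
  · intro x y hxy
    obtain ⟨z, hz, huniq⟩ := L.exU_right a (L.mul a x)
    exact (huniq x rfl).trans (huniq y (by simpa using hxy.symm)).symm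
  · intro b
    obtain ⟨z, hz, -⟩ := L.exU_right a b
    exact ⟨z, hz⟩

/-- The right translation `R_a : y ↦ y · a`, as a permutation of `G`. -/
noncomputable def Rt (L : Loop G) (a : G) : Equiv.Perm G :=
  Equiv.ofBijective _ (L.mulRight_bijective a)

/-- The left translation `L_a : y ↦ a · y`, as a permutation of `G`. -/
noncomputable def Lt (L : Loop G) (a : G) : Equiv.Perm G :=
  Equiv.ofBijective _ (L.mulLeft_bijective a)

/-- `(U, V, W)` is an autotopism of `L` iff `xU · yV = (x·y)W` for all `x, y`. -/
def IsAutotopism (L : Loop G) (U V W : Equiv.Perm G) : Prop :=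
  ∀ x y, L.mul (U x) (V y) = W (L.mul x y)

/-- The set of autotopism triples of a loop. -/
def AUTset (L : Loop G) : Set (Equiv.Perm G × Equiv.Perm G × Equiv.Perm G) :=
  {T | L.IsAutotopism T.1 T.2.1 T.2.2}

/-- The Bryant–Schneider set: all special maps of the loop. -/
def BSset (L : Loop G) : Set (Equiv.Perm G) :=
  {θ | ∃ f g : G, L.IsAutotopism (θ.trans (L.Rt g)⁻¹) (θ.trans (L.Lt f)⁻¹) θ}

/-- `SSYM`: the bijections of `G` mapping `H` into itself. -/
def SSYMset (H : Set G) : Set (Equiv.Perm G) :=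
  {θ | ∀ h ∈ H, θ h ∈ H}

/-- The Smarandache Bryant–Schneider set relative to the S-subgroup `H`. -/
def SBSset (L : Loop G) (H : Set G) : Set (Equiv.Perm G) :=
  {θ | (∀ h ∈ H, θ h ∈ H) ∧
    ∃ f ∈ H, ∃ g ∈ H, L.IsAutotopism (θ.trans (L.Rt g)⁻¹) (θ.trans (L.Lt f)⁻¹) θ}

/-- `H` is an S-subgroup of the loop `L`: a nontrivial proper subgroup. -/
structure IsSSubgroup (L : Loop G) (H : Set G) : Prop where
  nontrivial : ∃ a ∈ H, a ≠ L.e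
  proper : H ≠ Set.univ
  one_mem : L.e ∈ H
  mul_mem : ∀ a ∈ H, ∀ b ∈ H, L.mul a b ∈ H
  inv_mem : ∀ a ∈ H, ∃ b ∈ H, L.mul a b = L.e ∧ L.mul b a = L.e
  mul_assoc : ∀ a ∈ H, ∀ b ∈ H, ∀ c ∈ H, L.mul (L.mul a b) c = L.mul a (L.mul b c)

/-- The multiplication `x ∘ y = xR_g⁻¹ · yL_f⁻¹` of the `f,g`-principal isotope. -/
noncomputable def isoMul (L : Loop G) (f g : G) (x y : G) : G :=
  L.mul ((L.Rt g)⁻¹ x) ((L.Lt f)⁻¹ y)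

/-- The middle nucleus `N_μ` of a loop. -/
def middleNucleus (L : Loop G) : Set G :=
  {g | ∀ x y, L.mul x (L.mul g y) = L.mul (L.mul x g) y}

/-- `Ω(G,·)`: autotopisms of the form `(θR_g⁻¹, θL_f⁻¹, θ)` with `f, g ∈ H` and
`θ` mapping `H` into itself. -/
def OmegaSet (L : Loop G) (H : Set G) :
    Set (Equiv.Perm G × Equiv.Perm G × Equiv.Perm G) :=
  {T | (∀ h ∈ H, T.2.2 h ∈ H) ∧
    ∃ f ∈ H, ∃ g ∈ H, T.1 = T.2.2.trans (L.Rt g)⁻¹ ∧ T.2.1 = T.2.2.trans (L.Lt f)⁻¹ ∧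
      L.IsAutotopism T.1 T.2.1 T.2.2}

/-- The Smarandache automorphism set `SA(G,·)` relative to `H`. -/
def SAset (L : Loop G) (H : Set G) : Set (Equiv.Perm G) :=
  {θ | (∀ h ∈ H, θ h ∈ H) ∧ ∀ x y, θ (L.mul x y) = L.mul (θ x) (θ y)}

/-- `θ` is an S-isomorphism from `(L, H)` onto `(M, H')`. -/
def IsSIso (L M : Loop G) (H H' : Set G) (θ : Equiv.Perm G) : Prop :=
  (∀ h ∈ H, θ h ∈ H') ∧ ∀ x y, θ (L.mul x y) = M.mul (θ x) (θ y)

/-- `Θ(G,·)`: the pairs `(f,g) ∈ H × H` such that the Smarandache `f,g`-principal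
isotope of `L` is S-isomorphic to `L`. -/
def ThetaSet (L : Loop G) (H : Set G) : Set (G × G) :=
  {p | p.1 ∈ H ∧ p.2 ∈ H ∧
    ∃ M : Loop G, M.mul = L.isoMul p.1 p.2 ∧ ∃ θ : Equiv.Perm G, IsSIso M L H H θ}

/-- A GS-loop: an S-loop that is S-isomorphic to every S-loop isotope of itself. -/
def IsGSLoop (L : Loop G) (H : Set G) : Prop :=
  ∀ M : Loop G,
    (∃ U V W : Equiv.Perm G, ∀ x y, M.mul (U x) (V y) = W (L.mul x y)) →
    (∃ H' : Set G, M.IsSSubgroup H') →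
    ∃ H' : Set G, M.IsSSubgroup H' ∧ ∃ θ : Equiv.Perm G, IsSIso L M H H' θ

section Aux

variable {G : Type*}

theorem m_left_cancel (L : Loop G) {a x y : G} (h : L.mul a x = L.mul a y) : x = y := by
  obtain ⟨z, hz, hu⟩ := L.exU_right a (L.mul a y)
  exact (hu x h).trans (hu y rfl).symm

theorem m_right_cancel (L : Loop G) {a x y : G} (h : L.mul x a = L.mul y a) : x = y := by
  obtain ⟨z, hz, hu⟩ := L.exU_left a (L.mul y a)
  exact (hu x h).trans (hu y rfl).symm

/-- The right inverse of an element. -/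
noncomputable def rinv (L : Loop G) (a : G) : G := (L.exU_right a L.e).exists.choose

theorem mul_rinv (L : Loop G) (a : G) : L.mul a (L.rinv a) = L.e :=
  (L.exU_right a L.e).exists.choose_spec

theorem mem_nuc (L : Loop G) {n : G} :
    n ∈ L.middleNucleus ↔ ∀ x y, L.mul x (L.mul n y) = L.mul (L.mul x n) y := Iff.rfl

theorem e_mem_nuc (L : Loop G) : L.e ∈ L.middleNucleus := by
  intro x y; rw [L.one_mul, L.mul_one]

theorem nuc_mul_mem (L : Loop G) {a b : G} (ha : a ∈ L.middleNucleus)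
    (hb : b ∈ L.middleNucleus) : L.mul a b ∈ L.middleNucleus := by
  intro x y
  rw [← hb a y, ha x (L.mul b y), hb (L.mul x a) y, ha x b]

theorem rinv_mul (L : Loop G) {c : G} (hc : c ∈ L.middleNucleus) :
    L.mul (L.rinv c) c = L.e := by
  apply L.m_right_cancel (a := L.rinv c)
  rw [← hc (L.rinv c) (L.rinv c), L.mul_rinv, L.mul_one, L.one_mul]

theorem rinv_right (L : Loop G) {c : G} (hc : c ∈ L.middleNucleus) (x : G) :
    L.mul (L.mul x (L.rinv c)) c = x := by
  apply L.m_right_cancel (a := L.rinv c)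
  rw [← hc (L.mul x (L.rinv c)) (L.rinv c), L.mul_rinv, L.mul_one]

theorem rinv_mem_nuc (L : Loop G) {c : G} (hc : c ∈ L.middleNucleus) :
    L.rinv c ∈ L.middleNucleus := by
  intro x y
  obtain ⟨z, hz, -⟩ := L.exU_right c y
  rw [← hz, hc (L.rinv c) z, L.rinv_mul hc, L.one_mul, hc (L.mul x (L.rinv c)) z,
    L.rinv_right hc]

theorem rinv_rinv (L : Loop G) {c : G} (hc : c ∈ L.middleNucleus) :
    L.rinv (L.rinv c) = c :=
  L.m_left_cancel (a := L.rinv c) (by rw [L.mul_rinv, L.rinv_mul hc])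

theorem Rt_apply (L : Loop G) (a x : G) : L.Rt a x = L.mul x a := rfl
theorem Lt_apply (L : Loop G) (a x : G) : L.Lt a x = L.mul a x := rfl

theorem Rt_inv_apply (L : Loop G) {g : G} (hg : g ∈ L.middleNucleus) (z : G) :
    (L.Rt g)⁻¹ z = L.mul z (L.rinv g) := by
  rw [Equiv.Perm.inv_def, Equiv.symm_apply_eq]
  exact (L.rinv_right hg z).symm

theorem Lt_inv_apply (L : Loop G) {f : G} (hf : f ∈ L.middleNucleus) (z : G) :
    (L.Lt f)⁻¹ z = L.mul (L.rinv f) z := by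
  rw [Equiv.Perm.inv_def, Equiv.symm_apply_eq]
  rw [Lt_apply, L.rinv_mem_nuc hf f z, L.mul_rinv, L.one_mul]

/-- The `c`-homotope of `L`, for `c` in the middle nucleus: `x ∘ y = x·(c·y)`. -/
noncomputable def nucIso (L : Loop G) (c : G) (hc : c ∈ L.middleNucleus) : Loop G where
  mul x y := L.mul x (L.mul c y)
  e := L.rinv c
  one_mul x := by
    show L.mul (L.rinv c) (L.mul c x) = x
    rw [hc (L.rinv c) x, L.rinv_mul hc, L.one_mul]
  mul_one x := by
    show L.mul x (L.mul c (L.rinv c)) = x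
    rw [L.mul_rinv, L.mul_one]
  exU_right a b := by
    obtain ⟨u, hu, huu⟩ := L.exU_right a b
    obtain ⟨x, hx, hxx⟩ := L.exU_right c u
    exact ⟨x, by simpa [hx] using hu, fun y hy => hxx y (huu _ hy)⟩
  exU_left a b := L.exU_left (L.mul c a) b

theorem nucIso_mul (L : Loop G) {c : G} (hc : c ∈ L.middleNucleus) (x y : G) :
    (L.nucIso c hc).mul x y = L.mul x (L.mul c y) := rfl

/-- `H = N_μ(L)` is an S-subgroup of the `c`-homotope. -/
theorem nucIso_sSubgroup (L : Loop G) {c : G} (hc : c ∈ L.middleNucleus)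
    (hH : L.IsSSubgroup L.middleNucleus)
    (hnt : ∃ a ∈ L.middleNucleus, ∃ b ∈ L.middleNucleus, a ≠ b) :
    (L.nucIso c hc).IsSSubgroup L.middleNucleus := by
  constructor
  · obtain ⟨a, ha, b, hb, hab⟩ := hnt
    by_cases h : a = (L.nucIso c hc).e
    · exact ⟨b, hb, fun hh => hab (h.trans hh.symm)⟩
    · exact ⟨a, ha, h⟩
  · exact hH.proper
  · exact L.rinv_mem_nuc hc
  · intro a ha b hb
    exact L.nuc_mul_mem ha (L.nuc_mul_mem hc hb)
  · intro a ha
    refine ⟨L.mul (L.rinv c) (L.mul (L.rinv a) (L.rinv c)),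
      L.nuc_mul_mem (L.rinv_mem_nuc hc) (L.nuc_mul_mem (L.rinv_mem_nuc ha) (L.rinv_mem_nuc hc)),
      ?_, ?_⟩
    · show L.mul a (L.mul c (L.mul (L.rinv c) (L.mul (L.rinv a) (L.rinv c)))) = L.rinv c
      rw [L.rinv_mem_nuc hc c (L.mul (L.rinv a) (L.rinv c)), L.mul_rinv, L.one_mul,
        L.rinv_mem_nuc ha a (L.rinv c), L.mul_rinv, L.one_mul]
    · show L.mul (L.mul (L.rinv c) (L.mul (L.rinv a) (L.rinv c))) (L.mul c a) = L.rinv c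
      rw [hc (L.mul (L.rinv c) (L.mul (L.rinv a) (L.rinv c))) a,
        L.rinv_mem_nuc ha (L.rinv c) (L.rinv c), L.rinv_right hc, L.rinv_right ha]
  · intro a ha b hb d hd
    show L.mul (L.mul a (L.mul c b)) (L.mul c d) = L.mul a (L.mul c (L.mul b (L.mul c d)))
    rw [hb c (L.mul c d), ← (L.nuc_mul_mem hc hb) a (L.mul c d)]

/-- The middle nucleus of the `c`-homotope is contained in `H`. -/
theorem nucIso_nuc_subset (L : Loop G) {c : G} (hc : c ∈ L.middleNucleus) {n : G}
    (hn : n ∈ (L.nucIso c hc).middleNucleus) : n ∈ L.middleNucleus := by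
  have key : ∀ x y, L.mul x (L.mul c (L.mul n (L.mul c y)))
      = L.mul (L.mul x (L.mul c n)) (L.mul c y) := hn
  have step1 : ∀ z, L.mul c (L.mul n z) = L.mul (L.mul c n) z := by
    intro z
    obtain ⟨y, hy, -⟩ := L.exU_right c z
    have h2 := key L.e y
    rw [L.one_mul, L.one_mul, hy] at h2
    exact h2
  have step2 : L.mul c n ∈ L.middleNucleus := by
    intro x z
    obtain ⟨y, hy, -⟩ := L.exU_right c z
    have h2 := key x y
    rw [step1 (L.mul c y), hy] at h2
    exact h2
  have : n = L.mul (L.rinv c) (L.mul c n) := by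
    apply L.m_left_cancel (a := c)
    rw [L.rinv_mem_nuc hc c (L.mul c n), L.mul_rinv, L.one_mul]
  rw [this]
  exact L.nuc_mul_mem (L.rinv_mem_nuc hc) step2

/-- An isomorphism onto the homotope sends `H` into the homotope's middle nucleus. -/
theorem iso_maps_nucleus (L M : Loop G) (θ : Equiv.Perm G)
    (hiso : ∀ x y, θ (L.mul x y) = M.mul (θ x) (θ y)) {h : G}
    (hh : h ∈ L.middleNucleus) : θ h ∈ M.middleNucleus := by
  intro x y
  have hx : x = θ (θ.symm x) := (θ.apply_symm_apply x).symm
  have hy : y = θ (θ.symm y) := (θ.apply_symm_apply y).symm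
  rw [hx, hy, ← hiso h (θ.symm y), ← hiso (θ.symm x) _, ← hiso (θ.symm x) h,
    ← hiso (L.mul (θ.symm x) h) (θ.symm y), hh (θ.symm x) (θ.symm y)]

/-- For each `c ∈ H`, the GS-property produces an isomorphism of `L` onto the
`c`-homotope which maps `H` into itself. -/
theorem exists_base [Finite G] (L : Loop G) (hH : L.IsSSubgroup L.middleNucleus)
    (hGS : Loop.IsGSLoop L L.middleNucleus) (hcard : 1 < Nat.card ↥(L.middleNucleus))
    {c : G} (hc : c ∈ L.middleNucleus) :
    ∃ θ : Equiv.Perm G, (∀ h ∈ L.middleNucleus, θ h ∈ L.middleNucleus) ∧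
      ∀ x y, θ (L.mul x y) = L.mul (θ x) (L.mul c (θ y)) := by
  have hnt : ∃ a ∈ L.middleNucleus, ∃ b ∈ L.middleNucleus, a ≠ b := by
    have : Nontrivial ↥(L.middleNucleus) := Finite.one_lt_card_iff_nontrivial.mp hcard
    obtain ⟨⟨a, ha⟩, ⟨b, hb⟩, hab⟩ := this
    exact ⟨a, ha, b, hb, fun h => hab (Subtype.ext h)⟩
  obtain ⟨H', hH', θ, hθH', hθmul⟩ := hGS (L.nucIso c hc)
    ⟨1, (L.Lt c)⁻¹, 1, fun x y => by
      show (L.nucIso c hc).mul x ((L.Lt c)⁻¹ y) = L.mul x y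
      rw [nucIso_mul, Lt_inv_apply L hc, L.rinv_mem_nuc hc c y, L.mul_rinv, L.one_mul]⟩
    ⟨L.middleNucleus, L.nucIso_sSubgroup hc hH hnt⟩
  exact ⟨θ, fun h hh => L.nucIso_nuc_subset hc
    (L.iso_maps_nucleus (L.nucIso c hc) θ hθmul hh), hθmul⟩

theorem rinv_e (L : Loop G) : L.rinv L.e = L.e :=
  L.m_left_cancel (a := L.e) (by rw [L.mul_rinv, L.mul_one])

theorem mem_SBS_iff (L : Loop G) (θ : Equiv.Perm G) :
    θ ∈ L.SBSset L.middleNucleus ↔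
      (∀ h ∈ L.middleNucleus, θ h ∈ L.middleNucleus) ∧
        ∃ c ∈ L.middleNucleus, ∀ x y,
          θ (L.mul x y) = L.mul (θ x) (L.mul c (θ y)) := by
  constructor
  · rintro ⟨hmap, f, hf, g, hg, hauto⟩
    refine ⟨hmap, L.mul (L.rinv g) (L.rinv f),
      L.nuc_mul_mem (L.rinv_mem_nuc hg) (L.rinv_mem_nuc hf), fun x y => ?_⟩
    have h := hauto x y
    rw [Equiv.trans_apply, Equiv.trans_apply, Rt_inv_apply L hg, Lt_inv_apply L hf] at h
    rw [← h, ← L.rinv_mem_nuc hf (L.rinv g) (θ y),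
      L.rinv_mem_nuc hg (θ x) (L.mul (L.rinv f) (θ y))]
  · rintro ⟨hmap, c, hc, hmul⟩
    refine ⟨hmap, L.rinv c, L.rinv_mem_nuc hc, L.e, L.e_mem_nuc, fun x y => ?_⟩
    rw [Equiv.trans_apply, Equiv.trans_apply, Rt_inv_apply L L.e_mem_nuc,
      Lt_inv_apply L (L.rinv_mem_nuc hc), L.rinv_rinv hc, L.rinv_e, L.mul_one, hmul]

theorem SA_maps_e (L : Loop G) {α : Equiv.Perm G} (hα : α ∈ L.SAset L.middleNucleus) :
    α L.e = L.e := by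
  have h := hα.2 L.e L.e
  rw [L.mul_one] at h
  obtain ⟨z, hz, hu⟩ := L.exU_right (α L.e) (α L.e)
  exact (hu (α L.e) h.symm).trans (hu L.e (L.mul_one _)).symm

theorem inv_maps_nuc [Finite G] (L : Loop G) (σ : Equiv.Perm G)
    (hσ : ∀ h ∈ L.middleNucleus, σ h ∈ L.middleNucleus) :
    ∀ h ∈ L.middleNucleus, σ⁻¹ h ∈ L.middleNucleus := by
  set T : ↥(L.middleNucleus) → ↥(L.middleNucleus) := fun x => ⟨σ x, hσ x x.2⟩ with hT
  have hinj : Function.Injective T := by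
    intro a b hab
    exact Subtype.ext (σ.injective (congrArg Subtype.val hab))
  have hsurj : Function.Surjective T := Finite.surjective_of_injective hinj
  intro h hh
  obtain ⟨x, hx⟩ := hsurj ⟨h, hh⟩
  have : σ x = h := congrArg Subtype.val hx
  rw [Equiv.Perm.inv_def, ← this, Equiv.symm_apply_apply]
  exact x.2

theorem SBS_card [Finite G] (L : Loop G) (hH : L.IsSSubgroup L.middleNucleus)
    (hGS : Loop.IsGSLoop L L.middleNucleus) (hcard : 1 < Nat.card ↥(L.middleNucleus)) :
    Nat.card ↥(L.SBSset L.middleNucleus) =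
      Nat.card ↥(L.middleNucleus) * Nat.card ↥(L.SAset L.middleNucleus) := by
  have key : ∀ d : ↥(L.middleNucleus), ∃ θ : Equiv.Perm G,
      (∀ h ∈ L.middleNucleus, θ h ∈ L.middleNucleus) ∧
      ∀ x y, θ (L.mul x y) = L.mul (θ x) (L.mul (L.rinv d.1) (θ y)) :=
    fun d => L.exists_base hH hGS hcard (L.rinv_mem_nuc d.2)
  choose Θ hΘH hΘmul using key
  have Θe : ∀ d, Θ d L.e = d.1 := by
    intro d
    have h := hΘmul d L.e L.e
    rw [L.mul_one] at h
    have h1 : L.mul (L.rinv d.1) (Θ d L.e) = L.e :=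
      L.m_left_cancel (a := Θ d L.e) (h.symm.trans (L.mul_one (Θ d L.e)).symm)
    exact L.m_left_cancel (a := L.rinv d.1) (h1.trans (L.rinv_mul d.2).symm)
  set F : ↥(L.middleNucleus) × ↥(L.SAset L.middleNucleus) → ↥(L.SBSset L.middleNucleus) :=
    fun p => ⟨(p.2.1 : Equiv.Perm G).trans (Θ p.1), by
      refine (L.mem_SBS_iff _).mpr ⟨fun h hh => hΘH p.1 _ (p.2.2.1 h hh),
        L.rinv p.1.1, L.rinv_mem_nuc p.1.2, fun x y => ?_⟩
      rw [Equiv.trans_apply, Equiv.trans_apply, Equiv.trans_apply, p.2.2.2 x y,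
        hΘmul p.1 _ _]⟩ with hF
  have hinj : Function.Injective F := by
    rintro ⟨d, α⟩ ⟨d', α'⟩ heq
    have heq' : (α.1).trans (Θ d) = (α'.1).trans (Θ d') := congrArg Subtype.val heq
    have he : Θ d (α.1 L.e) = Θ d' (α'.1 L.e) := by
      have := congrArg (fun (σ : Equiv.Perm G) => σ L.e) heq'
      simpa [Equiv.trans_apply] using this
    rw [L.SA_maps_e α.2, L.SA_maps_e α'.2, Θe d, Θe d'] at he
    have hd : d = d' := Subtype.ext he
    subst hd
    have : α.1 = α'.1 := by
      apply Equiv.ext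
      intro x
      have := congrArg (fun (σ : Equiv.Perm G) => σ x) heq'
      simp only [Equiv.trans_apply] at this
      exact (Θ d).injective this
    exact Prod.ext rfl (Subtype.ext this)
  have hsurj : Function.Surjective F := by
    rintro ⟨θ, hθ⟩
    obtain ⟨hmap, c, hc, hmul⟩ := (L.mem_SBS_iff θ).mp hθ
    have hd : θ L.e ∈ L.middleNucleus := hmap L.e L.e_mem_nuc
    set d : ↥(L.middleNucleus) := ⟨θ L.e, hd⟩ with hdd
    have hcd : L.mul c (θ L.e) = L.e := by
      have h := hmul L.e L.e
      rw [L.mul_one] at h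
      exact L.m_left_cancel (a := θ L.e) (h.symm.trans (L.mul_one (θ L.e)).symm)
    have hcrinv : c = L.rinv d.1 :=
      L.m_right_cancel (a := d.1) (hcd.trans (L.rinv_mul hd).symm)
    set α : Equiv.Perm G := θ.trans (Θ d)⁻¹ with hα
    have hαapply : ∀ x, α x = (Θ d).symm (θ x) := fun x => rfl
    have hΘα : ∀ x, Θ d (α x) = θ x := by
      intro x
      rw [hαapply, Equiv.apply_symm_apply]
    have hαSA : α ∈ L.SAset L.middleNucleus := by
      constructor
      · intro h hh
        have : (Θ d)⁻¹ (θ h) ∈ L.middleNucleus :=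
          L.inv_maps_nuc (Θ d) (hΘH d) (θ h) (hmap h hh)
        exact this
      · intro x y
        apply (Θ d).injective
        rw [hΘα, hΘmul d, hΘα, hΘα, hmul, hcrinv]
    refine ⟨(d, ⟨α, hαSA⟩), ?_⟩
    apply Subtype.ext
    apply Equiv.ext
    intro x
    exact hΘα x
  have : Nat.card ↥(L.SBSset L.middleNucleus) =
      Nat.card (↥(L.middleNucleus) × ↥(L.SAset L.middleNucleus)) :=
    (Nat.card_congr (Equiv.ofBijective F ⟨hinj, hsurj⟩)).symm
  rw [this, Nat.card_prod]

theorem lagrange [Finite G] (L : Loop G) (hH : L.IsSSubgroup L.middleNucleus) :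
    ∃ k : ℕ, 1 < k ∧ Nat.card G = k * Nat.card ↥(L.middleNucleus) := by
  set s : Setoid G := ⟨fun x y => ∃ h ∈ L.middleNucleus, L.mul x h = y, by
    refine ⟨fun x => ⟨L.e, L.e_mem_nuc, L.mul_one x⟩, ?_, ?_⟩
    · rintro x y ⟨h, hh, hxy⟩
      exact ⟨L.rinv h, L.rinv_mem_nuc hh,
        by rw [← hxy, ← hh x (L.rinv h), L.mul_rinv, L.mul_one]⟩
    · rintro x y z ⟨h1, hh1, h1e⟩ ⟨h2, hh2, h2e⟩
      exact ⟨L.mul h1 h2, L.nuc_mul_mem hh1 hh2, by rw [hh1 x h2, h1e, h2e]⟩⟩ with hs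
  set φ : Quotient s × ↥(L.middleNucleus) → G := fun p => L.mul p.1.out p.2.1 with hφ
  have hinj : Function.Injective φ := by
    rintro ⟨t, h1, hh1⟩ ⟨u, h2, hh2⟩ heq
    have heq' : L.mul t.out h1 = L.mul u.out h2 := heq
    have hrel : s.r t.out u.out := by
      refine ⟨L.mul h1 (L.rinv h2), L.nuc_mul_mem hh1 (L.rinv_mem_nuc hh2), ?_⟩
      rw [hh1 t.out (L.rinv h2), heq', ← hh2 u.out (L.rinv h2), L.mul_rinv, L.mul_one]
    have ht : t = u := by
      rw [← t.out_eq, ← u.out_eq]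
      exact Quotient.sound hrel
    subst ht
    have : h1 = h2 := L.m_left_cancel heq'
    simp [this]
  have hsurjφ : Function.Surjective φ := by
    intro x
    have hrel : s.r (Quotient.mk s x).out x := Quotient.mk_out x
    obtain ⟨h, hh, he⟩ := hrel
    exact ⟨(Quotient.mk s x, ⟨h, hh⟩), he⟩
  have hcardG : Nat.card G = Nat.card (Quotient s) * Nat.card ↥(L.middleNucleus) := by
    rw [(Nat.card_congr (Equiv.ofBijective φ ⟨hinj, hsurjφ⟩)).symm, Nat.card_prod]
  refine ⟨Nat.card (Quotient s), ?_, hcardG⟩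
  have hne : Nonempty (Quotient s) := ⟨Quotient.mk s L.e⟩
  have hpos : 0 < Nat.card (Quotient s) := Nat.card_pos
  rcases Nat.lt_or_ge 1 (Nat.card (Quotient s)) with h | h
  · exact h
  · exfalso
    have h1 : Nat.card (Quotient s) = 1 := le_antisymm h hpos
    have hsub : Subsingleton (Quotient s) := (Nat.card_eq_one_iff_unique.mp h1).1
    apply hH.proper
    apply Set.eq_univ_iff_forall.mpr
    intro x
    have : Quotient.mk s L.e = Quotient.mk s x := Subsingleton.elim _ _
    obtain ⟨h, hh, he⟩ := Quotient.exact this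
    rw [L.one_mul] at he
    rwa [← he]

end Aux

end Loop
/-- Let `(G,·)` be a finite GS-loop whose middle nucleus
`N_μ(G,·)` has more than one element. Then, taking the S-subgroup `H = N_μ(G,·)`,
one has `|H| = |SBS(G,·)| / |SA(G,·)|`, and there exists a natural number `n > 1`
with `|G| = n·|SBS(G,·)| / |SA(G,·)|`. -/
theorem card_eq_of_nucleus_nontrivial {G : Type*} [Finite G] (L : Loop G)
    (hH : L.IsSSubgroup L.middleNucleus) (hGS : Loop.IsGSLoop L L.middleNucleus)
    (hcard : 1 < Nat.card ↥(L.middleNucleus)) :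
    (Nat.card ↥(L.middleNucleus) : ℚ) =
        (Nat.card ↥(L.SBSset L.middleNucleus) : ℚ) /
          (Nat.card ↥(L.SAset L.middleNucleus) : ℚ) ∧
      ∃ n : ℕ, 1 < n ∧
        (Nat.card G : ℚ) =
          n * (Nat.card ↥(L.SBSset L.middleNucleus) : ℚ) /
            (Nat.card ↥(L.SAset L.middleNucleus) : ℚ) := by
  have hSBS := L.SBS_card hH hGS hcard
  obtain ⟨k, hk, hG⟩ := L.lagrange hH
  have hSA1 : (1 : Equiv.Perm G) ∈ L.SAset L.middleNucleus :=
    ⟨fun h hh => by simpa using hh, fun x y => by simp⟩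
  have hSApos : 0 < Nat.card ↥(L.SAset L.middleNucleus) :=
    @Nat.card_pos _ ⟨⟨1, hSA1⟩⟩ _
  have ht0 : (Nat.card ↥(L.SAset L.middleNucleus) : ℚ) ≠ 0 :=
    Nat.cast_ne_zero.mpr hSApos.ne'
  constructor
  · rw [hSBS, Nat.cast_mul, mul_div_assoc, div_self ht0, mul_one]
  · refine ⟨k, hk, ?_⟩
    rw [hG, hSBS]
    push_cast
    field_simp
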